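/- With L, d, D, R, F as above (F(S) = ω·Σ_{l∈S} R(l) + (1−ω)·D(S), 0 < ω < 1), let S ⊆ L with |S| ≥ 2, let S_R = L \ S, and let S' ⊆ S_R with |S'| = m ≥ 1. Then F(S ∪ S') ≤ F(S) + ω · R_max + (1−ω) · D_max, where R_max is the sum of the m largest values of R over S_R and D_max is the sum of the m largest values of x ↦ min_{l ∈ S} d(x, l) over S_R. -/

import Mathlib

open Finset

noncomputable def dmin {L : Type*} [DecidableEq L] (d : L → L → ℝ) (x : L) (T : Finset L) : ℝ :=
  sInf ((T.image (d x) : Finset ℝ) : Set ℝ)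

noncomputable def aggDiv {L : Type*} [DecidableEq L] (d : L → L → ℝ) (S : Finset L) : ℝ :=
  ∑ l ∈ S, dmin d l (S.erase l)

noncomputable def topSum {L : Type*} (SR : Finset L) (m : ℕ) (f : L → ℝ) : ℝ :=
  sSup { s : ℝ | ∃ T : Finset L, T ⊆ SR ∧ T.card = m ∧ s = ∑ l ∈ T, f l }

lemma dmin_anti {L : Type*} [DecidableEq L] (d : L → L → ℝ) (x : L) {T T' : Finset L}
    (h : T ⊆ T') (hne : T.Nonempty) : dmin d x T' ≤ dmin d x T := by
  apply csInf_le_csInf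
  · exact (T'.image (d x)).finite_toSet.bddBelow
  · exact Finset.coe_nonempty.mpr (hne.image _)
  · exact_mod_cast Finset.image_subset_image h

lemma le_topSum {L : Type*} (SR : Finset L) (m : ℕ) (f : L → ℝ)
    {T : Finset L} (hT : T ⊆ SR) (hc : T.card = m) : ∑ l ∈ T, f l ≤ topSum SR m f := by
  apply le_csSup
  · apply Set.Finite.bddAbove
    apply Set.Finite.subset (SR.powerset.image fun T => ∑ l ∈ T, f l).finite_toSet
    rintro s ⟨T, hT, _, rfl⟩
    exact Finset.mem_coe.mpr (Finset.mem_image.mpr ⟨T, Finset.mem_powerset.mpr hT, rfl⟩)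
  · exact ⟨T, hT, hc, rfl⟩

theorem stmt7 {L : Type*} [Fintype L] [DecidableEq L] (d : L → L → ℝ)
    (hsym : ∀ a b, d a b = d b a) (hnn : ∀ a b, 0 ≤ d a b)
    (R : L → ℝ) (hR : ∀ l, 0 ≤ R l) (ω : ℝ) (hω0 : 0 < ω) (hω1 : ω < 1)
    (S S' : Finset L) (hS : 2 ≤ S.card) (hS' : S' ⊆ Sᶜ) (m : ℕ) (hm : 1 ≤ m)
    (hcard : S'.card = m) :
    ω * ∑ l ∈ S ∪ S', R l + (1 - ω) * aggDiv d (S ∪ S') ≤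
      (ω * ∑ l ∈ S, R l + (1 - ω) * aggDiv d S) +
        ω * topSum Sᶜ m R + (1 - ω) * topSum Sᶜ m (fun x => dmin d x S) := by
  have hdisj : Disjoint S S' :=
    Finset.disjoint_left.mpr fun a ha ha' => (Finset.mem_compl.mp (hS' ha')) ha
  have hSne : S.Nonempty := Finset.card_pos.mp (by omega)
  have h1 : ∑ l ∈ S', R l ≤ topSum Sᶜ m R := le_topSum _ _ _ hS' hcard
  have h2 : ∑ l ∈ S', dmin d l S ≤ topSum Sᶜ m (fun x => dmin d x S) :=
    le_topSum _ _ _ hS' hcard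
  have h3 : ∑ l ∈ S, dmin d l ((S ∪ S').erase l) ≤ aggDiv d S := by
    apply Finset.sum_le_sum
    intro l hl
    apply dmin_anti
    · exact Finset.erase_subset_erase _ Finset.subset_union_left
    · have := Finset.card_erase_of_mem hl
      exact Finset.card_pos.mp (by omega)
  have h4 : ∑ l ∈ S', dmin d l ((S ∪ S').erase l) ≤ ∑ l ∈ S', dmin d l S := by
    apply Finset.sum_le_sum
    intro l hl
    apply dmin_anti _ _ _ hSne
    exact Finset.subset_erase.mpr ⟨Finset.subset_union_left,
      Finset.mem_compl.mp (hS' hl)⟩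
  rw [Finset.sum_union hdisj]
  unfold aggDiv at h3 ⊢
  rw [Finset.sum_union hdisj]
  have hω1' : (0:ℝ) ≤ 1 - ω := by linarith
  nlinarith [mul_le_mul_of_nonneg_left h1 hω0.le,
    mul_le_mul_of_nonneg_left (h4.trans h2) hω1',
    mul_le_mul_of_nonneg_left h3 hω1']
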